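/- For every connected pseudograph with n vertices and k hanging edges, the number of constrained orientations in which every vertex has outdegree exactly 2 is at most 2^{k/2} · 24^{(2n-k)/4} · 2^{-n} ≈ 2.4495^n · 0.6389^k (the Brègman–Minc permanent bound applied to the doubled incidence matrix). -/

import Mathlib

open Finset

section Aux

variable {ε V : Type*} [Fintype ε] [Fintype V] [DecidableEq ε] [DecidableEq V]

/-- number of 2-bounded "edge-ownership" configurations -/
def cfg (ends : ε → Sym2 V) (d : V) (A : Finset ε) (c : V → ℕ) : Finset (ε → V) :=
  Finset.univ.filter fun o => (∀ e ∈ A, o e ∈ ends e) ∧ (∀ e ∉ A, o e = d) ∧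
    ∀ w, (A.filter fun e => o e = w).card = c w

lemma mem_cfg {ends : ε → Sym2 V} {d : V} {A : Finset ε} {c : V → ℕ} {o : ε → V} :
    o ∈ cfg ends d A c ↔ (∀ e ∈ A, o e ∈ ends e) ∧ (∀ e ∉ A, o e = d) ∧
      ∀ w, (A.filter fun e => o e = w).card = c w := by
  simp [cfg]

lemma sym2_filter_card_le (s : Sym2 V) : (univ.filter fun w => w ∈ s).card ≤ 2 := by
  induction s using Sym2.inductionOn with
  | hf a b =>
    have h : (univ.filter fun w => w ∈ s(a, b)) ⊆ {a, b} := by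
      intro x hx
      simp only [mem_filter, Sym2.mem_iff] at hx
      simp [hx.2]
    exact (Finset.card_le_card h).trans ((Finset.card_insert_le a {b}).trans (by simp))

lemma choose_le_rpow {r cv : ℕ} (hr1 : 1 ≤ r) (hr4 : r ≤ 4) (hcv : cv ≤ 2) :
    (r.choose cv : ℝ) ≤ (6 : ℝ) ^ ((r : ℝ) / 4) := by
  have hn : (r.choose cv) ^ 4 ≤ 6 ^ r := by
    interval_cases r <;> interval_cases cv <;> decide
  have h6 : ((r.choose cv : ℝ)) ^ (4 : ℕ) ≤ (6 : ℝ) ^ (r : ℕ) := by exact_mod_cast hn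
  have h0 : (0 : ℝ) ≤ (r.choose cv : ℝ) := Nat.cast_nonneg _
  calc (r.choose cv : ℝ) = (((r.choose cv : ℝ)) ^ (4 : ℕ)) ^ ((1 : ℝ) / 4) := by
        rw [← Real.rpow_natCast _ 4, ← Real.rpow_mul h0]
        norm_num
    _ ≤ ((6 : ℝ) ^ (r : ℕ)) ^ ((1 : ℝ) / 4) :=
        Real.rpow_le_rpow (by positivity) h6 (by norm_num)
    _ = (6 : ℝ) ^ ((r : ℝ) / 4) := by
        rw [← Real.rpow_natCast 6 r, ← Real.rpow_mul (by norm_num)]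
        ring_nf

lemma cfg_card_le (ends : ε → Sym2 V) (d : V) (A : Finset ε) :
    ∀ c : V → ℕ, (∀ w, c w ≤ 2) →
      ((cfg ends d A c).card : ℝ) ≤ (6 : ℝ) ^ ((A.card : ℝ) / 4) := by
  induction A using Finset.strongInduction with
  | _ A ih =>
  intro c hc
  rcases (cfg ends d A c).eq_empty_or_nonempty with hemp | ⟨o₀, ho₀⟩
  · rw [hemp]
    simpa using Real.rpow_nonneg (by norm_num : (0:ℝ) ≤ 6) _
  rcases eq_or_ne A ∅ with rfl | hAne
  · have h1 : (cfg ends d (∅ : Finset ε) c).card ≤ 1 := by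
      refine Finset.card_le_one.2 ?_
      intro a ha b hb
      funext e
      rw [(mem_cfg.1 ha).2.1 e (by simp), (mem_cfg.1 hb).2.1 e (by simp)]
    calc ((cfg ends d (∅ : Finset ε) c).card : ℝ) ≤ 1 := by exact_mod_cast h1
      _ = (6 : ℝ) ^ (((∅ : Finset ε).card : ℝ) / 4) := by simp
  -- main case
  have hm1 : 1 ≤ A.card := Finset.card_pos.2 (Finset.nonempty_iff_ne_empty.2 hAne)
  obtain ⟨hmem₀, -, hfib₀⟩ := mem_cfg.1 ho₀
  have hsumc : ∑ w, c w = A.card := by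
    have h := Finset.card_eq_sum_card_fiberwise
      (f := o₀) (s := A) (t := univ) (fun x _ => mem_univ _)
    simp_rw [hfib₀] at h
    exact h.symm
  set inc : V → Finset ε := fun w => A.filter fun e => w ∈ ends e with hinc
  have hsum_inc : ∑ w, (inc w).card ≤ 2 * A.card := by
    calc ∑ w, (inc w).card = ∑ w : V, ∑ e ∈ A, if w ∈ ends e then 1 else 0 := by
          simp_rw [hinc, Finset.card_filter]
      _ = ∑ e ∈ A, ∑ w : V, if w ∈ ends e then 1 else 0 := Finset.sum_comm
      _ = ∑ e ∈ A, (univ.filter fun w => w ∈ ends e).card := by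
          simp_rw [Finset.card_filter]
      _ ≤ ∑ _e ∈ A, 2 := Finset.sum_le_sum fun e _ => sym2_filter_card_le _
      _ = 2 * A.card := by rw [Finset.sum_const, smul_eq_mul, mul_comm]
  have hcinc : ∀ w, 1 ≤ c w → 1 ≤ (inc w).card := by
    intro w hw
    rw [← hfib₀ w] at hw
    obtain ⟨e, he⟩ := Finset.card_pos.1 hw
    have heA : e ∈ A := (mem_filter.1 he).1
    refine Finset.card_pos.2 ⟨e, mem_filter.2 ⟨heA, ?_⟩⟩
    have := hmem₀ e heA
    rwa [(mem_filter.1 he).2] at this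
  have hv : ∃ v : V, 1 ≤ (inc v).card ∧ (inc v).card ≤ 4 := by
    by_contra hbad
    push_neg at hbad
    set P := univ.filter fun w => 1 ≤ (inc w).card with hP
    have h1 : ∑ w ∈ P, c w = ∑ w : V, c w := by
      refine Finset.sum_subset (subset_univ _) ?_
      intro w _ hwP
      by_contra hcw
      exact hwP (mem_filter.2 ⟨mem_univ _, hcinc w (by omega)⟩)
    have h2 : ∑ w ∈ P, c w ≤ 2 * P.card := by
      calc ∑ w ∈ P, c w ≤ ∑ _w ∈ P, 2 := Finset.sum_le_sum fun w _ => hc w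
        _ = 2 * P.card := by rw [Finset.sum_const, smul_eq_mul, mul_comm]
    have h3 : 5 * P.card ≤ ∑ w ∈ P, (inc w).card := by
      calc 5 * P.card = ∑ _w ∈ P, 5 := by rw [Finset.sum_const, smul_eq_mul, mul_comm]
        _ ≤ ∑ w ∈ P, (inc w).card := by
            refine Finset.sum_le_sum fun w hw => ?_
            have h1w : 1 ≤ (inc w).card := (mem_filter.1 hw).2
            exact hbad w h1w
    have h4 : ∑ w ∈ P, (inc w).card ≤ ∑ w, (inc w).card :=
      Finset.sum_le_sum_of_subset (subset_univ _)
    omega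
  obtain ⟨v, hv1, hv4⟩ := hv
  set I := inc v with hIdef
  have hIA : I ⊆ A := Finset.filter_subset _ _
  set A' := A \ I with hA'def
  have hA'ss : A' ⊂ A := Finset.sdiff_ssubset hIA (Finset.card_pos.1 hv1)
  have hcardA' : A'.card = A.card - I.card := Finset.card_sdiff_of_subset hIA
  set c' : Finset ε → V → ℕ := fun S w =>
    if w = v then 0 else c w - ((I \ S).filter fun e => ends e = s(v, w)).card with hc'def
  have hc'le : ∀ S w, c' S w ≤ 2 := by
    intro S w
    simp only [hc'def]
    split
    · omega
    · exact le_trans (Nat.sub_le _ _) (hc w)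
  have hdec : (cfg ends d A c).card =
      ∑ S ∈ I.powersetCard (c v),
        ((cfg ends d A c).filter fun o => (A.filter fun e => o e = v) = S).card := by
    refine Finset.card_eq_sum_card_fiberwise ?_
    intro o ho
    obtain ⟨ho1, -, ho3⟩ := mem_cfg.1 ho
    rw [Finset.mem_coe, mem_powersetCard]
    constructor
    · intro e he
      obtain ⟨heA, heov⟩ := mem_filter.1 he
      refine mem_filter.2 ⟨heA, ?_⟩
      have := ho1 e heA
      rwa [heov] at this
    · exact ho3 v
  have hbranch : ∀ S ∈ I.powersetCard (c v),
      ((cfg ends d A c).filter fun o => (A.filter fun e => o e = v) = S).card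
        ≤ (cfg ends d A' (c' S)).card := by
    intro S hS
    obtain ⟨hSI, hScard⟩ := mem_powersetCard.1 hS
    refine Finset.card_le_card_of_injOn (fun o => fun e => if e ∈ A' then o e else d) ?_ ?_
    · intro o ho
      obtain ⟨hocfg, hofib⟩ := mem_filter.1 ho
      obtain ⟨ho1, ho2, ho3⟩ := mem_cfg.1 hocfg
      rw [Finset.mem_coe, mem_cfg]
      refine ⟨?_, ?_, ?_⟩
      · intro e he
        simp only [he, if_pos]
        exact ho1 e (Finset.mem_sdiff.1 he).1
      · intro e he
        simp [he]
      · intro w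
        have hres : (A'.filter fun e => (if e ∈ A' then o e else d) = w)
            = A'.filter fun e => o e = w := by
          refine Finset.filter_congr ?_
          intro e he
          simp [he]
        rw [hres]
        by_cases hw : w = v
        · subst hw
          simp only [hc'def, if_pos rfl]
          rw [Finset.card_eq_zero, Finset.filter_eq_empty_iff]
          intro e he hoev
          have heS : e ∈ S := by
            rw [← hofib]
            exact mem_filter.2 ⟨(Finset.mem_sdiff.1 he).1, hoev⟩
          exact (Finset.mem_sdiff.1 he).2 (hSI heS)
        · -- w ≠ v
          have hAsplit : A'.filter (fun e => o e = w) ∪ I.filter (fun e => o e = w)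
              = A.filter fun e => o e = w := by
            rw [← Finset.filter_union, Finset.sdiff_union_of_subset hIA]
          have hdisj : Disjoint (A'.filter fun e => o e = w) (I.filter fun e => o e = w) :=
            Finset.disjoint_filter_filter (Finset.sdiff_disjoint)
          have hcards : (A'.filter fun e => o e = w).card + (I.filter fun e => o e = w).card
              = c w := by
            rw [← Finset.card_union_of_disjoint hdisj, hAsplit, ho3]
          have hIfil : I.filter (fun e => o e = w) = (I \ S).filter fun e => ends e = s(v, w) := by
            ext e
            simp only [mem_filter, Finset.mem_sdiff]
            constructor
            · rintro ⟨heI, heow⟩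
              have heA : e ∈ A := hIA heI
              have hvmem : v ∈ ends e := (mem_filter.1 heI).2
              have homem : o e ∈ ends e := ho1 e heA
              have henS : e ∉ S := by
                intro heS
                rw [← hofib] at heS
                have : o e = v := (mem_filter.1 heS).2
                rw [heow] at this
                exact hw this
              refine ⟨⟨heI, henS⟩, ?_⟩
              have hne : v ≠ w := fun h => hw h.symm
              rw [← Sym2.mem_and_mem_iff hne]
              rw [heow] at homem
              exact ⟨hvmem, homem⟩
            · rintro ⟨⟨heI, henS⟩, hee⟩
              have heA : e ∈ A := hIA heI
              have homem : o e ∈ ends e := ho1 e heA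
              rw [hee, Sym2.mem_iff] at homem
              rcases homem with h | h
              · exfalso
                exact henS (by rw [← hofib]; exact mem_filter.2 ⟨heA, h⟩)
              · exact ⟨heI, h⟩
          have hc'w : c' S w = c w - ((I \ S).filter fun e => ends e = s(v, w)).card := by
            simp [hc'def, hw]
          rw [hc'w, ← hIfil]
          exact Nat.eq_sub_of_add_eq hcards
    · -- injectivity
      intro o₁ h₁ o₂ h₂ heq
      simp only [Finset.coe_filter, Set.mem_setOf_eq] at h₁ h₂
      obtain ⟨h₁cfg, h₁fib⟩ := h₁
      obtain ⟨h₂cfg, h₂fib⟩ := h₂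
      obtain ⟨h₁1, h₁2, -⟩ := mem_cfg.1 h₁cfg
      obtain ⟨h₂1, h₂2, -⟩ := mem_cfg.1 h₂cfg
      funext e
      by_cases heA : e ∈ A
      · by_cases heI : e ∈ I
        · by_cases heS : e ∈ S
          · have e1 : o₁ e = v := by
              rw [← h₁fib] at heS; exact (mem_filter.1 heS).2
            have e2 : o₂ e = v := by
              rw [← h₂fib] at heS; exact (mem_filter.1 heS).2
            rw [e1, e2]
          · have hvmem : v ∈ ends e := (mem_filter.1 heI).2
            obtain ⟨x, hx⟩ := Sym2.mem_iff_exists.1 hvmem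
            have key : ∀ o : ε → V, (∀ e ∈ A, o e ∈ ends e) →
                (A.filter fun e' => o e' = v) = S → o e = x := by
              intro o ho hofib
              have homem : o e ∈ ends e := ho e heA
              rw [hx, Sym2.mem_iff] at homem
              rcases homem with h | h
              · exact absurd (by rw [← hofib]; exact mem_filter.2 ⟨heA, h⟩) heS
              · exact h
            rw [key o₁ h₁1 h₁fib, key o₂ h₂1 h₂fib]
        · have heA' : e ∈ A' := Finset.mem_sdiff.2 ⟨heA, heI⟩
          have := congrFun heq e
          simpa [heA'] using this
      · rw [h₁2 e heA, h₂2 e heA]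
  -- combine
  have hchoose : (I.card.choose (c v) : ℝ) ≤ (6 : ℝ) ^ ((I.card : ℝ) / 4) :=
    choose_le_rpow hv1 hv4 (hc v)
  have hIcard_le : I.card ≤ A.card := Finset.card_le_card hIA
  calc ((cfg ends d A c).card : ℝ)
      = ∑ S ∈ I.powersetCard (c v),
          (((cfg ends d A c).filter fun o => (A.filter fun e => o e = v) = S).card : ℝ) := by
        exact_mod_cast hdec
    _ ≤ ∑ S ∈ I.powersetCard (c v), ((cfg ends d A' (c' S)).card : ℝ) := by
        refine Finset.sum_le_sum fun S hS => ?_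
        exact_mod_cast hbranch S hS
    _ ≤ ∑ _S ∈ I.powersetCard (c v), (6 : ℝ) ^ ((A'.card : ℝ) / 4) :=
        Finset.sum_le_sum fun S _ => ih A' hA'ss (c' S) (hc'le S)
    _ = (I.card.choose (c v) : ℝ) * (6 : ℝ) ^ ((A'.card : ℝ) / 4) := by
        rw [Finset.sum_const, Finset.card_powersetCard, nsmul_eq_mul]
    _ ≤ (6 : ℝ) ^ ((I.card : ℝ) / 4) * (6 : ℝ) ^ ((A'.card : ℝ) / 4) := by
        exact mul_le_mul_of_nonneg_right hchoose (Real.rpow_nonneg (by norm_num) _)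
    _ = (6 : ℝ) ^ ((A.card : ℝ) / 4) := by
        rw [← Real.rpow_add (by norm_num : (0:ℝ) < 6)]
        congr 1
        have : (A'.card : ℝ) = (A.card : ℝ) - (I.card : ℝ) := by
          rw [hcardA', Nat.cast_sub hIcard_le]
        rw [this]
        ring

end Aux

/-- Brègman–Minc bound for pseudograph orientations: for every connected
pseudograph with `n` vertices and `k` hanging edges (normal subgraph `G`,
hanging edges `H` with endpoint map `hend`), the number of constrained
orientations in which every vertex has total outdegree exactly 2 is at most
`2^(k/2) · 24^((2n-k)/4) · 2^(-n)`. -/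
theorem pseudograph_bregman_minc_bound
    {V H : Type*} [Fintype V] [Fintype H]
    (G : SimpleGraph V) (hend : H → V)
    (hconn : G.Connected) :
    (Set.ncard {o : G.edgeSet → V |
        (∀ e : G.edgeSet, o e ∈ (e : Sym2 V)) ∧
        ∀ v : V, Set.ncard {e : G.edgeSet | o e = v}
          + Set.ncard {h : H | hend h = v} = 2} : ℝ)
      ≤ (2 : ℝ) ^ ((Fintype.card H : ℝ) / 2) *
        (24 : ℝ) ^ ((2 * (Fintype.card V : ℝ) - (Fintype.card H : ℝ)) / 4) *
        (2 : ℝ) ^ (-(Fintype.card V : ℝ)) := by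
  classical
  haveI : Fintype ↥G.edgeSet := Fintype.ofFinite _
  have hVne : Nonempty V := hconn.nonempty
  obtain ⟨d⟩ := hVne
  set k := Fintype.card H with hk
  set n := Fintype.card V with hn
  have hRpos : (0:ℝ) < (2 : ℝ) ^ ((k : ℝ) / 2) *
      (24 : ℝ) ^ ((2 * (n:ℝ) - (k:ℝ)) / 4) * (2:ℝ) ^ (-(n:ℝ)) := by positivity
  set Ω := {o : G.edgeSet → V |
        (∀ e : G.edgeSet, o e ∈ (e : Sym2 V)) ∧
        ∀ v : V, Set.ncard {e : G.edgeSet | o e = v}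
          + Set.ncard {h : H | hend h = v} = 2} with hΩ
  rcases Set.eq_empty_or_nonempty Ω with hemp | ⟨o₀, ho₀⟩
  · rw [hemp, Set.ncard_empty]
    exact_mod_cast hRpos.le
  set κ : V → ℕ := fun v => (univ.filter fun h : H => hend h = v).card with hκdef
  have hκcast : ∀ v, Set.ncard {h : H | hend h = v} = κ v := by
    intro v
    simp only [hκdef]
    rw [show {h : H | hend h = v} = ↑(univ.filter fun h : H => hend h = v) from by
      ext h; simp]
    exact Set.ncard_coe_finset _
  have hfibcast : ∀ (o : G.edgeSet → V) (v : V), Set.ncard {e : G.edgeSet | o e = v}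
      = ((univ : Finset G.edgeSet).filter fun e => o e = v).card := by
    intro o v
    rw [show {e : G.edgeSet | o e = v} = ↑((univ : Finset G.edgeSet).filter fun e => o e = v)
      from by ext e; simp]
    exact Set.ncard_coe_finset _
  set c : V → ℕ := fun v => 2 - κ v with hcdef
  have hκle : ∀ v, κ v ≤ 2 := by
    intro v
    have h := ho₀.2 v
    rw [hκcast] at h
    omega
  have hcle : ∀ v, c v ≤ 2 := fun v => by simp [hcdef]
  have hcκ : ∀ v, c v + κ v = 2 := fun v => by have := hκle v; simp [hcdef]; omega
  have hΩeq : Ω = ↑(cfg (fun e : G.edgeSet => (e : Sym2 V)) d univ c) := by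
    rw [hΩ]
    ext o
    simp only [Set.mem_setOf_eq, Finset.mem_coe, mem_cfg]
    constructor
    · rintro ⟨h1, h2⟩
      refine ⟨fun e _ => h1 e, fun e he => absurd (mem_univ e) he, fun w => ?_⟩
      have h := h2 w
      rw [hκcast, hfibcast] at h
      simp only [hcdef]
      omega
    · rintro ⟨h1, -, h3⟩
      refine ⟨fun e => h1 e (mem_univ e), fun w => ?_⟩
      rw [hκcast, hfibcast, h3 w]
      have := hκle w
      simp only [hcdef]
      omega
  have ho₀cfg : o₀ ∈ cfg (fun e : G.edgeSet => (e : Sym2 V)) d univ c := by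
    have := ho₀
    rw [hΩeq] at this
    exact_mod_cast this
  obtain ⟨-, -, h3⟩ := mem_cfg.1 ho₀cfg
  set m := Fintype.card ↥G.edgeSet with hm
  have hsum_c : ∑ v, c v = m := by
    have h := Finset.card_eq_sum_card_fiberwise
      (f := o₀) (s := (univ : Finset G.edgeSet)) (t := univ) (fun x _ => mem_univ _)
    simp_rw [h3] at h
    rw [Finset.card_univ] at h
    exact h.symm
  have hsum_κ : ∑ v, κ v = k := by
    have h := Finset.card_eq_sum_card_fiberwise
      (f := hend) (s := (univ : Finset H)) (t := univ) (fun x _ => mem_univ _)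
    rw [Finset.card_univ] at h
    exact h.symm
  have hmk : m + k = 2 * n := by
    have h : ∑ v : V, (c v + κ v) = ∑ _v : V, 2 :=
      Finset.sum_congr rfl fun v _ => hcκ v
    rw [Finset.sum_add_distrib, hsum_c, hsum_κ, Finset.sum_const, Finset.card_univ,
      smul_eq_mul] at h
    rw [h, hn]
    ring
  rw [hΩeq, Set.ncard_coe_finset]
  refine le_trans (cfg_card_le _ d univ c hcle) ?_
  have hcard : ((univ : Finset ↥G.edgeSet).card : ℝ) = (m:ℝ) := by
    rw [Finset.card_univ]
  have hmreal : (m:ℝ) + (k:ℝ) = 2*(n:ℝ) := by exact_mod_cast hmk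
  have h24 : (24:ℝ) ^ ((m:ℝ)/4) = (2:ℝ) ^ ((m:ℝ)/2) * (6:ℝ) ^ ((m:ℝ)/4) := by
    rw [show (24:ℝ) = 4 * 6 by norm_num, Real.mul_rpow (by norm_num) (by norm_num)]
    congr 1
    rw [show (4:ℝ) = (2:ℝ) ^ (2:ℕ) by norm_num, ← Real.rpow_natCast 2 2,
      ← Real.rpow_mul (by norm_num)]
    congr 1
    push_cast
    ring
  have h2s : (2:ℝ) ^ ((k:ℝ)/2) * (2:ℝ) ^ ((m:ℝ)/2) * (2:ℝ) ^ (-(n:ℝ)) = 1 := by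
    rw [← Real.rpow_add (by norm_num : (0:ℝ) < 2), ← Real.rpow_add (by norm_num : (0:ℝ) < 2),
      show (k:ℝ)/2 + (m:ℝ)/2 + -(n:ℝ) = 0 by linarith, Real.rpow_zero]
  have hRHS : (2:ℝ) ^ ((k:ℝ)/2) * (24:ℝ) ^ ((2*(n:ℝ) - (k:ℝ))/4) * (2:ℝ) ^ (-(n:ℝ))
      = (6:ℝ) ^ ((m:ℝ)/4) := by
    rw [show 2*(n:ℝ) - (k:ℝ) = (m:ℝ) by linarith, h24]
    calc (2:ℝ)^((k:ℝ)/2) * ((2:ℝ)^((m:ℝ)/2) * (6:ℝ)^((m:ℝ)/4)) * (2:ℝ)^(-(n:ℝ))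
        = ((2:ℝ)^((k:ℝ)/2) * (2:ℝ)^((m:ℝ)/2) * (2:ℝ)^(-(n:ℝ))) * (6:ℝ)^((m:ℝ)/4) := by
          ring
      _ = (6:ℝ)^((m:ℝ)/4) := by rw [h2s, one_mul]
  rw [hcard, hRHS]
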